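/- Let f(z) = z + a₂z² + a₃z³ + ⋯ be analytic on the unit disk D and ω(z) = c₁z + c₂z² + c₃z³ + ⋯ a Schwarz function such that 2zf'(z)(1 − ω(z)) = (f(z) − f(−z))(1 + ω(z)) for all z ∈ D. Then the third Hankel determinant of f satisfies H₃(1) = (1/4)[ −(c₃ − c₁c₂)² + 2c₁²c₂² + 2c₂c₄ ]. -/

import Mathlib

open Complex Metric FormalMultilinearSeries

private lemma coeff_unique {d e : ℕ → ℂ} {F : ℂ → ℂ}
    (hd : ∀ z ∈ ball (0:ℂ) 1, HasSum (fun n => d n * z ^ n) (F z))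
    (he : ∀ z ∈ ball (0:ℂ) 1, HasSum (fun n => e n * z ^ n) (F z)) :
    d = e := by
  have key : ∀ (d : ℕ → ℂ), (∀ z ∈ ball (0:ℂ) 1, HasSum (fun n => d n * z ^ n) (F z)) →
      HasFPowerSeriesAt F (ofScalars ℂ d) 0 := by
    intro d hd
    rw [hasFPowerSeriesAt_iff]
    filter_upwards [ball_mem_nhds (0:ℂ) one_pos] with z hz
    have h := hd z hz
    have hc : ∀ n, (ofScalars ℂ d).coeff n = d n := by
      intro n
      show (ofScalars ℂ d) n (fun _ => 1) = d n
      rw [ofScalars_apply_eq]; simp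
    simp only [hc, zero_add, smul_eq_mul]
    convert h using 2 with n
    · rfl
    ring
  have h := (key d hd).eq_formalMultilinearSeries (key e he)
  exact ofScalars_series_injective ℂ ℂ h

private lemma hasSum_mul_of_norm {u v : ℕ → ℂ} {A B : ℂ}
    (hu : HasSum u A) (hv : HasSum v B)
    (hu' : Summable fun n => ‖u n‖) (hv' : Summable fun n => ‖v n‖) :
    HasSum (fun n => ∑ kl ∈ Finset.HasAntidiagonal.antidiagonal n, u kl.1 * v kl.2) (A * B) := by
  have hs := summable_norm_sum_mul_antidiagonal_of_summable_norm hu' hv'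
  have h2 := tsum_mul_tsum_eq_tsum_sum_antidiagonal_of_summable_norm hu' hv'
  rw [hu.tsum_eq, hv.tsum_eq] at h2
  exact h2 ▸ (Summable.of_norm hs).hasSum

private lemma summable_coeff {d : ℕ → ℂ}
    (hd : ∀ z ∈ ball (0:ℂ) 1, Summable (fun n => d n * z ^ n))
    (k : ℕ) {z : ℂ} (hz : ‖z‖ < 1) :
    Summable (fun n : ℕ => (n:ℝ) ^ k * ‖d n * z ^ n‖) := by
  set t : ℝ := (1 + ‖z‖)/2 with ht
  have h0 : 0 ≤ ‖z‖ := norm_nonneg z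
  have hzt : ‖z‖ < t := by rw [ht]; linarith
  have ht1 : t < 1 := by rw [ht]; linarith
  have ht0 : 0 < t := by rw [ht]; linarith
  have htm : (t:ℂ) ∈ ball (0:ℂ) 1 := by
    rw [mem_ball_zero_iff]
    simpa [Complex.norm_real, abs_of_pos ht0] using ht1
  have hsum := hd _ htm
  obtain ⟨M, hM⟩ := (hsum.tendsto_atTop_zero.norm.bddAbove_range)
  simp only [mem_upperBounds, Set.mem_range, forall_exists_index] at hM
  have hMb : ∀ n : ℕ, ‖d n‖ * t ^ n ≤ M := by
    intro n
    have := hM _ n rfl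
    simpa [norm_mul, norm_pow, Complex.norm_real, abs_of_pos ht0] using this
  have hq : ‖z‖ / t < 1 := (div_lt_one ht0).2 hzt
  have hq0 : 0 ≤ ‖z‖ / t := by positivity
  have hgeom : Summable (fun n : ℕ => M * ((n:ℝ) ^ k * (‖z‖/t) ^ n)) := by
    exact (summable_pow_mul_geometric_of_norm_lt_one k
      (by rwa [Real.norm_eq_abs, _root_.abs_of_nonneg hq0])).mul_left M
  apply Summable.of_nonneg_of_le (fun n => by positivity) _ hgeom
  intro n
  have key : (n:ℝ) ^ k * ‖d n * z ^ n‖ = ((n:ℝ) ^ k * (‖z‖/t) ^ n) * (‖d n‖ * t ^ n) := by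
    rw [norm_mul, norm_pow, div_pow]
    field_simp
  rw [key]
  calc ((n:ℝ) ^ k * (‖z‖/t) ^ n) * (‖d n‖ * t ^ n)
      ≤ ((n:ℝ) ^ k * (‖z‖/t) ^ n) * M := by
        apply mul_le_mul_of_nonneg_left (hMb n) (by positivity)
    _ = M * ((n:ℝ) ^ k * (‖z‖/t) ^ n) := by ring

theorem third_hankel_formula_starlike_symmetric
    (f : ℂ → ℂ) (a : ℕ → ℂ)
    (hf : DifferentiableOn ℂ f (ball (0 : ℂ) 1))
    (hfa : ∀ z ∈ ball (0 : ℂ) 1, HasSum (fun n => a n * z ^ n) (f z))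
    (ha0 : a 0 = 0) (ha1 : a 1 = 1)
    (ω : ℂ → ℂ) (c : ℕ → ℂ)
    (hω : DifferentiableOn ℂ ω (ball (0 : ℂ) 1))
    (hωc : ∀ z ∈ ball (0 : ℂ) 1, HasSum (fun n => c n * z ^ n) (ω z))
    (hc0 : c 0 = 0)
    (hωmap : ∀ z ∈ ball (0 : ℂ) 1, ω z ∈ ball (0 : ℂ) 1)
    (heq : ∀ z ∈ ball (0 : ℂ) 1,
      2 * z * deriv f z * (1 - ω z) = (f z - f (-z)) * (1 + ω z)) :
    a 3 * (a 2 * a 4 - a 3 ^ 2) - a 4 * (a 4 - a 2 * a 3) + a 5 * (a 3 - a 2 ^ 2)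
      = (1 / 4) * (-(c 3 - c 1 * c 2) ^ 2 + 2 * c 1 ^ 2 * c 2 ^ 2 + 2 * c 2 * c 4) := by
  have hfasum : ∀ z ∈ ball (0:ℂ) 1, Summable (fun n => a n * z ^ n) :=
    fun z hz => (hfa z hz).summable
  have hωcsum : ∀ z ∈ ball (0:ℂ) 1, Summable (fun n => c n * z ^ n) :=
    fun z hz => (hωc z hz).summable
  -- iterated derivative coefficients of f
  have htay : ∀ z ∈ ball (0:ℂ) 1,
      HasSum (fun n => ((n.factorial : ℂ)⁻¹ * iteratedDeriv n f 0) * z ^ n) (f z) := by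
    intro z hz
    have h := Complex.hasSum_taylorSeries_on_ball hf hz
    convert h using 2 with n
    · rfl
    simp [smul_eq_mul]
    ring
  have hacoeff : ∀ n, iteratedDeriv n f 0 = (n.factorial : ℂ) * a n := by
    intro n
    have h := congrFun (coeff_unique hfa htay) n
    have hne : (n.factorial : ℂ) ≠ 0 := Nat.cast_ne_zero.2 n.factorial_ne_zero
    field_simp at h
    linear_combination -h
  -- power series of 2 z f'(z)
  have hdf : DifferentiableOn ℂ (deriv f) (ball (0:ℂ) 1) :=
    ((hf.analyticOnNhd isOpen_ball).deriv).differentiableOn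
  have hzf : ∀ z ∈ ball (0:ℂ) 1,
      HasSum (fun n : ℕ => (2 * (n:ℂ) * a n) * z ^ n) (2 * z * deriv f z) := by
    intro z hz
    have h := Complex.hasSum_taylorSeries_on_ball hdf hz
    have h' : HasSum (fun n : ℕ => ((n:ℂ) + 1) * a (n + 1) * z ^ n) (deriv f z) := by
      convert h using 2 with n
      · rfl
      have : iteratedDeriv n (deriv f) 0 = iteratedDeriv (n+1) f 0 :=
        (congrFun (iteratedDeriv_succ' (n := n) (f := f)) 0).symm
      rw [this, hacoeff (n+1)]
      have hne : (n.factorial : ℂ) ≠ 0 := Nat.cast_ne_zero.2 n.factorial_ne_zero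
      rw [Nat.factorial_succ]
      push_cast
      simp only [smul_eq_mul, sub_zero]
      field_simp
    have h2 := h'.mul_left (2 * z)
    have h3 : HasSum (fun n : ℕ => (fun m : ℕ => (2 * (m:ℂ) * a m) * z ^ m) (n + 1))
        (2 * z * deriv f z) := by
      convert h2 using 2 with n
      · rfl
      push_cast
      ring
    have := (hasSum_nat_add_iff (f := fun m : ℕ => (2 * (m:ℂ) * a m) * z ^ m) 1).mp h3
    simpa using this
  -- series for f z - f (-z)
  have hsym : ∀ z ∈ ball (0:ℂ) 1,
      HasSum (fun n : ℕ => (a n - (-1)^n * a n) * z ^ n) (f z - f (-z)) := by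
    intro z hz
    have h1 := hfa z hz
    have h2 := hfa (-z) (by simpa [mem_ball_zero_iff] using hz)
    have h := h1.sub h2
    convert h using 2 with n
    · rfl
    rw [neg_pow]
    ring
  -- series for 1 - ω and 1 + ω
  have hone : ∀ z : ℂ, HasSum (fun n : ℕ => (if n = 0 then (1:ℂ) else 0) * z ^ n) 1 := by
    intro z
    have : (fun n : ℕ => (if n = 0 then (1:ℂ) else 0) * z ^ n)
        = fun n : ℕ => if n = 0 then (1:ℂ) else 0 := by
      funext n
      split <;> simp_all
    rw [this]
    exact hasSum_ite_eq 0 1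
  have h1mω : ∀ z ∈ ball (0:ℂ) 1,
      HasSum (fun n : ℕ => ((if n = 0 then (1:ℂ) else 0) - c n) * z ^ n) (1 - ω z) := by
    intro z hz
    have h := (hone z).sub (hωc z hz)
    convert h using 2 with n
    · rfl
    ring
  have h1pω : ∀ z ∈ ball (0:ℂ) 1,
      HasSum (fun n : ℕ => ((if n = 0 then (1:ℂ) else 0) + c n) * z ^ n) (1 + ω z) := by
    intro z hz
    have h := (hone z).add (hωc z hz)
    convert h using 2 with n
    ring
  -- norm summabilities
  have hnz : ∀ z ∈ ball (0:ℂ) 1, ‖z‖ < 1 := fun z hz => mem_ball_zero_iff.mp hz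
  have Sδ : ∀ z : ℂ, Summable (fun n : ℕ => ‖(if n = 0 then (1:ℂ) else 0) * z ^ n‖) := by
    intro z
    have : (fun n : ℕ => ‖(if n = 0 then (1:ℂ) else 0) * z ^ n‖)
        = fun n : ℕ => if n = 0 then (1:ℝ) else 0 := by
      funext n
      split <;> simp_all
    rw [this]
    exact (hasSum_ite_eq 0 1).summable
  have Su : ∀ z ∈ ball (0:ℂ) 1, Summable (fun n : ℕ => ‖(2 * (n:ℂ) * a n) * z ^ n‖) := by
    intro z hz
    have h := (summable_coeff hfasum 1 (hnz z hz)).mul_left 2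
    apply h.of_nonneg_of_le (fun n => norm_nonneg _)
    intro n
    rw [norm_mul, norm_mul, norm_mul]
    simp only [Complex.norm_natCast, pow_one]
    rw [Complex.norm_ofNat]
    rw [norm_mul]
    nlinarith [norm_nonneg (a n), norm_nonneg (z ^ n), Nat.cast_nonneg (α := ℝ) n]
  have Ss : ∀ z ∈ ball (0:ℂ) 1,
      Summable (fun n : ℕ => ‖(a n - (-1)^n * a n) * z ^ n‖) := by
    intro z hz
    have h := (summable_coeff hfasum 0 (hnz z hz)).mul_left 2
    apply h.of_nonneg_of_le (fun n => norm_nonneg _)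
    intro n
    simp only [pow_zero, one_mul]
    rw [norm_mul]
    have h1 : ‖a n - (-1)^n * a n‖ ≤ 2 * ‖a n‖ := by
      calc ‖a n - (-1)^n * a n‖ ≤ ‖a n‖ + ‖(-1)^n * a n‖ := norm_sub_le _ _
        _ = 2 * ‖a n‖ := by rw [norm_mul, norm_pow, norm_neg, norm_one, one_pow]; ring
    have h2 : ‖a n * z ^ n‖ = ‖a n‖ * ‖z ^ n‖ := norm_mul _ _
    nlinarith [norm_nonneg (z ^ n), norm_nonneg (a n)]
  have Sv : ∀ (s : ℂ), s = 1 ∨ s = -1 → ∀ z ∈ ball (0:ℂ) 1,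
      Summable (fun n : ℕ => ‖((if n = 0 then (1:ℂ) else 0) + s * c n) * z ^ n‖) := by
    intro s hs z hz
    have h := ((Sδ z).add (summable_coeff hωcsum 0 (hnz z hz)))
    apply h.of_nonneg_of_le (fun n => norm_nonneg _)
    intro n
    simp only [pow_zero, one_mul]
    calc ‖((if n = 0 then (1:ℂ) else 0) + s * c n) * z ^ n‖
        = ‖(if n = 0 then (1:ℂ) else 0) * z ^ n + s * (c n * z ^ n)‖ := by ring_nf
      _ ≤ ‖(if n = 0 then (1:ℂ) else 0) * z ^ n‖ + ‖s * (c n * z ^ n)‖ := norm_add_le _ _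
      _ ≤ ‖(if n = 0 then (1:ℂ) else 0) * z ^ n‖ + ‖c n * z ^ n‖ := by
          rw [norm_mul]
          rcases hs with h | h <;> simp [h]
  -- Cauchy products
  have hL : ∀ z ∈ ball (0:ℂ) 1,
      HasSum (fun n : ℕ => (∑ kl ∈ Finset.HasAntidiagonal.antidiagonal n,
        (2 * (kl.1:ℂ) * a kl.1) * ((if kl.2 = 0 then (1:ℂ) else 0) - c kl.2)) * z ^ n)
        ((f z - f (-z)) * (1 + ω z)) := by
    intro z hz
    have Svm : Summable (fun n : ℕ => ‖((if n = 0 then (1:ℂ) else 0) - c n) * z ^ n‖) := by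
      have := Sv (-1) (Or.inr rfl) z hz
      apply this.congr
      intro n
      congr 2
      ring
    have h := hasSum_mul_of_norm (hzf z hz) (h1mω z hz) (Su z hz) Svm
    rw [heq z hz] at h
    convert h using 2 with n
    rw [Finset.sum_mul]
    apply Finset.sum_congr rfl
    intro kl hkl
    rw [← Finset.HasAntidiagonal.mem_antidiagonal.mp hkl, pow_add]
    ring
  have hR : ∀ z ∈ ball (0:ℂ) 1,
      HasSum (fun n : ℕ => (∑ kl ∈ Finset.HasAntidiagonal.antidiagonal n,
        (a kl.1 - (-1)^kl.1 * a kl.1) * ((if kl.2 = 0 then (1:ℂ) else 0) + c kl.2)) * z ^ n)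
        ((f z - f (-z)) * (1 + ω z)) := by
    intro z hz
    have Svp : Summable (fun n : ℕ => ‖((if n = 0 then (1:ℂ) else 0) + c n) * z ^ n‖) := by
      have := Sv 1 (Or.inl rfl) z hz
      apply this.congr
      intro n
      congr 2
      ring
    have h := hasSum_mul_of_norm (hsym z hz) (h1pω z hz) (Ss z hz) Svp
    convert h using 2 with n
    rw [Finset.sum_mul]
    apply Finset.sum_congr rfl
    intro kl hkl
    rw [← Finset.HasAntidiagonal.mem_antidiagonal.mp hkl, pow_add]
    ring
  -- equate coefficients
  have hLR := coeff_unique hL hR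
  have e2 := congrFun hLR 2
  have e3 := congrFun hLR 3
  have e4 := congrFun hLR 4
  have e5 := congrFun hLR 5
  simp only [Finset.Nat.sum_antidiagonal_eq_sum_range_succ_mk, Finset.sum_range_succ,
    Finset.sum_range_zero, ha0, ha1, hc0] at e2 e3 e4 e5
  norm_num at e2 e3 e4 e5
  have h2 : a 2 = c 1 := by linear_combination e2 / 4
  have h3 : a 3 = c 2 + c 1 ^ 2 := by linear_combination e3 / 4 + c 1 * h2
  have h4 : a 4 = (c 3 + 3 * c 1 * c 2 + 2 * c 1 ^ 3) / 2 := by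
    linear_combination e4 / 8 + (c 2 / 2) * h2 + c 1 * h3
  have h5 : a 5 = (c 4 + 2 * c 1 * c 3 + 2 * c 2 ^ 2 + 5 * c 1 ^ 2 * c 2 + 2 * c 1 ^ 4) / 2 := by
    linear_combination e5 / 8 + (c 3 / 2) * h2 + c 2 * h3 + c 1 * h4
  rw [h2, h3, h4, h5]
  ring
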